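/- Let R be a commutative ring in which 2 is invertible. For every sequence c : ℕ → R there exists a unique formal power series Q in one variable u over R such that: the constant coefficient of Q is 1; for every k ≥ 0 the coefficient of u^{2k+1} in Q equals c_k; and Q(u)·Q(-u) = 1. (In other words, a solution of q(u)q(-u)=1 with constant term 1 is uniquely determined by a free choice of its odd-degree coefficients.) -/

import Mathlib

open Finset PowerSeries

private def qseq {R : Type*} [CommRing R] [Invertible (2 : R)] (c : ℕ → R) : ℕ → R
  | 0 => 1
  | (n + 1) =>
    if n % 2 = 0 then c (n / 2)
    else -(⅟(2 : R)) * ∑ i ∈ (Finset.Ioo 0 (n + 1)).attach,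
      (-1 : R) ^ (i : ℕ) * qseq c i * qseq c (n + 1 - (i : ℕ))
decreasing_by
  · exact (Finset.mem_Ioo.mp i.2).2
  · have := (Finset.mem_Ioo.mp i.2).1; omega

private lemma qseq_zero {R : Type*} [CommRing R] [Invertible (2 : R)] (c : ℕ → R) :
    qseq c 0 = 1 := by rw [qseq]

private lemma qseq_odd {R : Type*} [CommRing R] [Invertible (2 : R)] (c : ℕ → R) (k : ℕ) :
    qseq c (2 * k + 1) = c k := by
  rw [qseq]
  simp [Nat.mul_mod_right, Nat.mul_div_cancel_left]

private lemma qseq_even {R : Type*} [CommRing R] [Invertible (2 : R)] (c : ℕ → R) (k : ℕ) :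
    qseq c (2 * k + 2) = -(⅟(2 : R)) *
      ∑ i ∈ Finset.Ioo 0 (2 * k + 2), (-1 : R) ^ i * qseq c i * qseq c (2 * k + 2 - i) := by
  show qseq c ((2 * k + 1) + 1) = _
  rw [qseq]
  rw [if_neg (by omega)]
  congr 1
  exact Finset.sum_attach _ (fun i => (-1 : R) ^ i * qseq c i * qseq c (2 * k + 1 + 1 - i))

private lemma negOnePow_sub {R : Type*} [CommRing R] {n i : ℕ} (h : i ≤ n) :
    (-1 : R) ^ (n - i) = (-1) ^ n * (-1) ^ i := by
  have h2 : ((-1 : R) ^ i) * ((-1) ^ i) = 1 := by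
    rw [← pow_add]; exact Even.neg_one_pow ⟨i, rfl⟩
  have h1 : ((-1 : R) ^ (n - i)) * (-1) ^ i = (-1) ^ n := by
    rw [← pow_add, Nat.sub_add_cancel h]
  calc (-1 : R) ^ (n - i) = (-1) ^ (n - i) * ((-1) ^ i * (-1) ^ i) := by rw [h2, mul_one]
    _ = ((-1) ^ (n - i) * (-1) ^ i) * (-1) ^ i := by ring
    _ = (-1) ^ n * (-1) ^ i := by rw [h1]

/-- For odd `n`, the symmetrized sum vanishes. -/
private lemma sum_odd_zero {R : Type*} [CommRing R] [Invertible (2 : R)] (b : ℕ → R) {n : ℕ}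
    (hn : n % 2 = 1) :
    ∑ i ∈ Finset.range (n + 1), b i * ((-1 : R) ^ (n - i) * b (n - i)) = 0 := by
  set S := ∑ i ∈ Finset.range (n + 1), b i * ((-1 : R) ^ (n - i) * b (n - i)) with hS
  have hpow : (-1 : R) ^ n = -1 := Odd.neg_one_pow ⟨n / 2, by omega⟩
  have hrefl := Finset.sum_range_reflect
    (fun i => b i * ((-1 : R) ^ (n - i) * b (n - i))) (n + 1)
  simp only [Nat.add_sub_cancel] at hrefl
  have hSS : S + S = 0 := by
    calc S + S
        = (∑ i ∈ Finset.range (n + 1),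
            b (n - i) * ((-1 : R) ^ (n - (n - i)) * b (n - (n - i)))) + S := by rw [hrefl]
      _ = ∑ i ∈ Finset.range (n + 1),
            (b (n - i) * ((-1 : R) ^ (n - (n - i)) * b (n - (n - i)))
              + b i * ((-1 : R) ^ (n - i) * b (n - i))) := by
          rw [hS, ← Finset.sum_add_distrib]
      _ = 0 := by
          refine Finset.sum_eq_zero fun i hi => ?_
          have hi' : i ≤ n := by simpa [Nat.lt_succ_iff] using hi
          rw [Nat.sub_sub_self hi', negOnePow_sub hi', hpow]
          ring
  calc S = ⅟(2 : R) * ((2 : R) * S) := by rw [← mul_assoc, invOf_mul_self, one_mul]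
    _ = ⅟(2 : R) * (S + S) := by rw [two_mul]
    _ = 0 := by rw [hSS, mul_zero]

/-- For even `n = 2k+2`, the symmetrized sum equals `2 b n` plus the middle part. -/
private lemma sum_even_eq {R : Type*} [CommRing R] (b : ℕ → R) (hb : b 0 = 1) (k : ℕ) :
    ∑ i ∈ Finset.range (2 * k + 2 + 1), b i * ((-1 : R) ^ (2 * k + 2 - i) * b (2 * k + 2 - i)) =
    2 * b (2 * k + 2) +
      ∑ i ∈ Finset.Ioo 0 (2 * k + 2), (-1 : R) ^ i * b i * b (2 * k + 2 - i) := by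
  have hevenpow : (-1 : R) ^ (2 * k + 2) = 1 := Even.neg_one_pow ⟨k + 1, by ring⟩
  have hmid : ∑ i ∈ Finset.Ioo 0 (2 * k + 2), (-1 : R) ^ i * b i * b (2 * k + 2 - i)
      = ∑ i ∈ Finset.range (2 * k + 1), b (i + 1) * ((-1 : R) ^ (2 * k + 2 - (i + 1)) * b (2 * k + 2 - (i + 1))) := by
    rw [← Finset.Ico_add_one_left_eq_Ioo, Finset.sum_Ico_eq_sum_range]
    rw [show 2 * k + 2 - (0 + 1) = 2 * k + 1 from by omega]
    refine Finset.sum_congr rfl fun i hi => ?_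
    have hle : i + 1 ≤ 2 * k + 2 := by
      have := Finset.mem_range.mp hi; omega
    rw [negOnePow_sub hle, hevenpow, one_mul]
    rw [show 0 + 1 + i = i + 1 from by omega]
    ring
  rw [Finset.sum_range_succ]
  rw [show (2 : ℕ) * k + 2 = (2 * k + 1) + 1 from rfl, Finset.sum_range_succ']
  rw [← hmid]
  simp only [Nat.sub_self, Nat.sub_zero, pow_zero, hb, hevenpow, one_mul, mul_one]
  ring

private lemma coeff_mul_rescale {R : Type*} [CommRing R] (φ : PowerSeries R) (n : ℕ) :
    PowerSeries.coeff n (φ * PowerSeries.rescale (-1 : R) φ) =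
    ∑ i ∈ Finset.range (n + 1),
      PowerSeries.coeff i φ * ((-1 : R) ^ (n - i) * PowerSeries.coeff (n - i) φ) := by
  rw [PowerSeries.coeff_mul, Finset.Nat.sum_antidiagonal_eq_sum_range_succ_mk]
  exact Finset.sum_congr rfl fun i _ => by rw [PowerSeries.coeff_rescale]


/-- Over a commutative ring in which `2` is invertible, a power series solution `Q` of
`Q(u) * Q(-u) = 1` with constant term `1` exists and is uniquely determined by a free choice
`c : ℕ → R` of its odd-degree coefficients. -/
theorem existsUnique_powerSeries_of_odd_coeffs {R : Type*} [CommRing R] [Invertible (2 : R)]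
    (c : ℕ → R) :
    ∃! Q : PowerSeries R,
      PowerSeries.constantCoeff Q = 1 ∧
      (∀ k : ℕ, PowerSeries.coeff (2 * k + 1) Q = c k) ∧
      Q * PowerSeries.rescale (-1 : R) Q = 1 := by
  refine ⟨PowerSeries.mk (qseq c), ⟨?_, ?_, ?_⟩, ?_⟩
  · rw [← PowerSeries.coeff_zero_eq_constantCoeff_apply, PowerSeries.coeff_mk, qseq_zero]
  · intro k
    rw [PowerSeries.coeff_mk, qseq_odd]
  · ext n
    rw [coeff_mul_rescale, PowerSeries.coeff_one]
    simp only [PowerSeries.coeff_mk]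
    rcases n with _ | m
    · simp [qseq_zero]
    · rw [if_neg (Nat.succ_ne_zero m)]
      rcases Nat.even_or_odd (m + 1) with he | ho
      · obtain ⟨j, hj⟩ := he
        have hj' : 0 < j := by omega
        rw [show m + 1 = 2 * (j - 1) + 2 from by omega]
        rw [sum_even_eq (qseq c) (qseq_zero c) (j - 1), qseq_even]
        have h2 : (2 : R) * ⅟(2 : R) = 1 := mul_invOf_self 2
        set T := ∑ i ∈ Finset.Ioo 0 (2 * (j - 1) + 2),
          (-1 : R) ^ i * qseq c i * qseq c (2 * (j - 1) + 2 - i) with hT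
        calc 2 * (-⅟(2 : R) * T) + T = -((2 : R) * ⅟(2 : R)) * T + T := by ring
          _ = 0 := by rw [h2]; ring
      · obtain ⟨k, hk⟩ := ho
        exact sum_odd_zero (qseq c) (by omega : (m + 1) % 2 = 1)
  · rintro Q' ⟨h0, hodd, hmul⟩
    ext n
    rw [PowerSeries.coeff_mk]
    induction n using Nat.strong_induction_on with
    | _ n ih =>
      rcases n with _ | m
      · rw [PowerSeries.coeff_zero_eq_constantCoeff_apply, h0, qseq_zero]
      · rcases Nat.even_or_odd (m + 1) with he | ho
        · obtain ⟨j, hj⟩ := he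
          have hj' : 0 < j := by omega
          have hn : m + 1 = 2 * (j - 1) + 2 := by omega
          rw [hn]
          have hz : ∑ i ∈ Finset.range (2 * (j - 1) + 2 + 1),
              PowerSeries.coeff i Q' * ((-1 : R) ^ (2 * (j - 1) + 2 - i)
                * PowerSeries.coeff (2 * (j - 1) + 2 - i) Q') = 0 := by
            rw [← coeff_mul_rescale, hmul, PowerSeries.coeff_one, if_neg (by omega)]
          rw [sum_even_eq (fun i => PowerSeries.coeff i Q')
            (by simpa using h0) (j - 1)] at hz
          have hmid : ∑ i ∈ Finset.Ioo 0 (2 * (j - 1) + 2),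
              (-1 : R) ^ i * PowerSeries.coeff i Q'
                * PowerSeries.coeff (2 * (j - 1) + 2 - i) Q'
              = ∑ i ∈ Finset.Ioo 0 (2 * (j - 1) + 2),
              (-1 : R) ^ i * qseq c i * qseq c (2 * (j - 1) + 2 - i) := by
            refine Finset.sum_congr rfl fun i hi => ?_
            obtain ⟨hi1, hi2⟩ := Finset.mem_Ioo.mp hi
            rw [ih i (by omega), ih (2 * (j - 1) + 2 - i) (by omega)]
          rw [hmid] at hz
          rw [qseq_even]
          have h2 : ⅟(2 : R) * (2 : R) = 1 := invOf_mul_self 2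
          calc PowerSeries.coeff (2 * (j - 1) + 2) Q'
              = ⅟(2 : R) * (2 * PowerSeries.coeff (2 * (j - 1) + 2) Q') := by
                rw [← mul_assoc, h2, one_mul]
            _ = ⅟(2 : R) * (-(∑ i ∈ Finset.Ioo 0 (2 * (j - 1) + 2),
                  (-1 : R) ^ i * qseq c i * qseq c (2 * (j - 1) + 2 - i))) := by
                linear_combination (⅟(2:R)) * hz
            _ = -⅟(2 : R) * ∑ i ∈ Finset.Ioo 0 (2 * (j - 1) + 2),
                  (-1 : R) ^ i * qseq c i * qseq c (2 * (j - 1) + 2 - i) := by ring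
        · obtain ⟨k, hk⟩ := ho
          rw [hk, hodd k, qseq_odd]
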